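/- Let P be a slicing of a triangulated category D. Suppose f : F → G is an isomorphism in D, and suppose given distinguished triangles F' → F → A →⁺ and G' → G → B →⁺ in which A ∈ P(φ) and B ∈ P(ψ) are nonzero, and F' (respectively G') is either zero or a nonzero object admitting a Harder–Narasimhan filtration with φ₋(F') > φ (respectively φ₋(G') > ψ). Then φ = ψ, and there exist unique morphisms f' : F' → G' and g : A → B such that (f', f, g) is a morphism of distinguished triangles; moreover f' and g are isomorphisms. -/

import Mathlib

open CategoryTheory CategoryTheory.Limits CategoryTheory.Pretriangulated

universe v u

variable (D : Type u) [Category.{v} D] [HasZeroObject D] [HasShift D ℤ] [Preadditive D]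
  [∀ n : ℤ, (shiftFunctor D n).Additive] [Pretriangulated D]

/-- A slicing `P` of a triangulated category `D`: for every real number `φ`, a full additive
subcategory `P φ` (given by a predicate on objects), closed under isomorphisms, such that
(i) `P (φ + 1) = P φ ⟦1⟧` and (ii) `Hom(A₁, A₂) = 0` whenever `A₁ ∈ P φ₁`, `A₂ ∈ P φ₂` and
`φ₁ > φ₂`. -/
structure Slicing where
  /-- the objects of the slice with phase `φ` -/
  P : ℝ → D → Prop
  mem_of_iso : ∀ {φ : ℝ} {X Y : D}, (X ≅ Y) → P φ X → P φ Y
  zero_mem : ∀ (φ : ℝ) (X : D), IsZero X → P φ X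
  sum_mem : ∀ (φ : ℝ) (X Y : D), P φ X → P φ Y → P φ (X ⊞ Y)
  shift_mem : ∀ (φ : ℝ) (X : D), P φ X → P (φ + 1) (X⟦(1 : ℤ)⟧)
  shift_mem' : ∀ (φ : ℝ) (X : D), P (φ + 1) (X⟦(1 : ℤ)⟧) → P φ X
  hom_zero : ∀ {φ₁ φ₂ : ℝ}, φ₂ < φ₁ → ∀ {A₁ A₂ : D}, P φ₁ A₁ → P φ₂ A₂ →
    ∀ f : A₁ ⟶ A₂, f = 0

variable {D}

/-- A Harder–Narasimhan filtration of a (necessarily nonzero) object `X` with respect to a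
slicing `S`: a finite collection of distinguished triangles
`F (j+1) → F j → A j →⁺ (F (j+1))⟦1⟧` for `0 ≤ j ≤ n`, with `F 0 = X`, `F (n+1) = 0`, where
each `A j` is a nonzero object of `S.P (phase j)` and
`phase n > phase (n-1) > ⋯ > phase 0`.
(The semistable HN-factors are `A n, …, A 0`; `φ₊(X) = phase n` and `φ₋(X) = phase 0`.) -/
structure HNFiltration (S : Slicing D) (X : D) where
  /-- the number of steps: there are `n + 1` HN-factors `A 0, …, A n` -/
  n : ℕ
  /-- the filtration objects -/
  F : ℕ → D
  /-- the semistable factors -/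
  A : ℕ → D
  /-- the phases of the factors -/
  phase : ℕ → ℝ
  f : ∀ j : ℕ, F (j + 1) ⟶ F j
  g : ∀ j : ℕ, F j ⟶ A j
  h : ∀ j : ℕ, A j ⟶ (F (j + 1))⟦(1 : ℤ)⟧
  F_zero : F 0 = X
  isZero_top : IsZero (F (n + 1))
  mem : ∀ j ≤ n, S.P (phase j) (A j)
  nonzero : ∀ j ≤ n, ¬ IsZero (A j)
  dist : ∀ j ≤ n, (Triangle.mk (f j) (g j) (h j) ∈ distTriang D)
  phase_lt : ∀ j : ℕ, j + 1 ≤ n → phase j < phase (j + 1)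

section Aux

variable {D : Type u} [Category.{v} D] [HasZeroObject D] [HasShift D ℤ] [Preadditive D]
  [∀ n : ℤ, (shiftFunctor D n).Additive] [Pretriangulated D]

lemma HNFiltration.phase0_le {S : Slicing D} {X : D} (HF : HNFiltration S X) :
    ∀ j ≤ HF.n, HF.phase 0 ≤ HF.phase j := by
  intro j hj
  induction j with
  | zero => exact le_refl _
  | succ k ih => exact (ih (by omega)).trans (le_of_lt (HF.phase_lt k hj))

lemma Slicing.vanish (S : Slicing D) {X Y : D} {c : ℝ} (hY : S.P c Y)
    (hX : IsZero X ∨ ∃ HF : HNFiltration S X, c < HF.phase 0) (u : X ⟶ Y) : u = 0 := by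
  rcases hX with h | ⟨HF, hc⟩
  · exact h.eq_of_src u 0
  · have step : ∀ i ≤ HF.n, (∀ v : HF.F (i + 1) ⟶ Y, v = 0) →
        (∀ v : HF.F i ⟶ Y, v = 0) := by
      intro i hi ih v
      obtain ⟨w, hw⟩ := Triangle.yoneda_exact₂ _ (HF.dist i hi) v (ih _)
      have hw0 : w = 0 :=
        S.hom_zero (lt_of_lt_of_le hc (HF.phase0_le i hi)) (HF.mem i hi) hY w
      rw [hw, hw0, comp_zero]; rfl
    have all : ∀ j : ℕ, ∀ v : HF.F (HF.n + 1 - j) ⟶ Y, v = 0 := by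
      intro j
      induction j with
      | zero => intro v; exact HF.isZero_top.eq_of_src v 0
      | succ k ih =>
        by_cases h : HF.n + 1 ≤ k
        · have hk : HF.n + 1 - (k + 1) = HF.n + 1 - k := by omega
          rw [hk]; exact ih
        · have h1 : HF.n + 1 - (k + 1) = HF.n - k := by omega
          have h2 : HF.n + 1 - k = (HF.n - k) + 1 := by omega
          rw [h1]
          exact step (HF.n - k) (by omega) (h2 ▸ ih)
    have h0 : ∀ v : HF.F 0 ⟶ Y, v = 0 := by
      have := all (HF.n + 1); rwa [Nat.sub_self] at this
    calc u = eqToHom HF.F_zero.symm ≫ (eqToHom HF.F_zero ≫ u) := by simp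
    _ = 0 := by rw [h0 (eqToHom HF.F_zero ≫ u), comp_zero]

lemma Slicing.mem_shift_neg (S : Slicing D) {Y : D} {c : ℝ} (hY : S.P c Y) :
    S.P (c - 1) (Y⟦(-1 : ℤ)⟧) := by
  apply S.shift_mem'
  have e : (Y⟦(-1 : ℤ)⟧)⟦(1 : ℤ)⟧ ≅ Y :=
    (shiftFunctorCompIsoId D (-1 : ℤ) (1 : ℤ) (by omega)).app Y
  have h := S.mem_of_iso e.symm hY
  rwa [sub_add_cancel]

lemma Slicing.vanish_neg (S : Slicing D) {X Y : D} {c : ℝ} (hY : S.P c Y)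
    (hX : IsZero X ∨ ∃ HF : HNFiltration S X, c < HF.phase 0) (u : X ⟶ Y⟦(-1 : ℤ)⟧) :
    u = 0 :=
  S.vanish (S.mem_shift_neg hY)
    (hX.imp id (fun ⟨HF, h⟩ => ⟨HF, by linarith⟩)) u

lemma Slicing.vanish_pos (S : Slicing D) {X Y : D} {c : ℝ} (hY : S.P c Y)
    (hX : IsZero X ∨ ∃ HF : HNFiltration S X, c < HF.phase 0) (u : X⟦(1 : ℤ)⟧ ⟶ Y) :
    u = 0 := by
  have h0 : ((shiftFunctorCompIsoId D (1 : ℤ) (-1 : ℤ) (by omega)).inv.app X) ≫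
      (shiftFunctor D (-1 : ℤ)).map u = 0 := S.vanish_neg hY hX _
  have h1 : (shiftFunctor D (-1 : ℤ)).map u = 0 := by
    rw [← cancel_epi ((shiftFunctorCompIsoId D (1 : ℤ) (-1 : ℤ) (by omega)).inv.app X),
      h0, comp_zero]
  exact (shiftFunctor D (-1 : ℤ)).map_injective (by rw [h1, Functor.map_zero])

lemma Slicing.aux_le (S : Slicing D) {F G F' G' A B : D} (e : F ≅ G)
    (a₁ : F' ⟶ F) (a₂ : F ⟶ A) (a₃ : A ⟶ F'⟦(1 : ℤ)⟧)
    (b₁ : G' ⟶ G) (b₂ : G ⟶ B) (b₃ : B ⟶ G'⟦(1 : ℤ)⟧)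
    (hTa : Triangle.mk a₁ a₂ a₃ ∈ distTriang D)
    (hTb : Triangle.mk b₁ b₂ b₃ ∈ distTriang D)
    {φ ψ : ℝ} (hA : S.P φ A) (hB : S.P ψ B) (hB₀ : ¬ IsZero B)
    (hF' : IsZero F' ∨ ∃ HF : HNFiltration S F', φ < HF.phase 0)
    (hG' : IsZero G' ∨ ∃ HG : HNFiltration S G', ψ < HG.phase 0) : φ ≤ ψ := by
  by_contra hcon
  push_neg at hcon
  have h1 : a₁ ≫ (e.hom ≫ b₂) = 0 :=
    S.vanish hB (hF'.imp id (fun ⟨HF, h⟩ => ⟨HF, lt_trans hcon h⟩)) _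
  obtain ⟨v, hv⟩ := Triangle.yoneda_exact₂ _ hTa (e.hom ≫ b₂) h1
  have hv0 : v = 0 := S.hom_zero hcon hA hB v
  have hb2 : b₂ = 0 := by
    have h2 : e.hom ≫ b₂ = 0 := hv.trans (by rw [hv0]; exact comp_zero)
    calc b₂ = e.inv ≫ (e.hom ≫ b₂) := by simp
    _ = 0 := by rw [h2, comp_zero]
  obtain ⟨r, hr⟩ := Triangle.yoneda_exact₂ _ (rot_of_distTriang _ hTb) (𝟙 B)
    (by change b₂ ≫ 𝟙 B = 0; rw [hb2, zero_comp])
  have hr0 : r = 0 := S.vanish_pos hB hG' r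
  exact hB₀ ((IsZero.iff_id_eq_zero B).2 (by rw [hr, hr0, comp_zero]; rfl))

lemma Slicing.fill_exists (S : Slicing D) {F G F' G' A B : D} (u : F ⟶ G)
    (a₁ : F' ⟶ F) (a₂ : F ⟶ A) (a₃ : A ⟶ F'⟦(1 : ℤ)⟧)
    (b₁ : G' ⟶ G) (b₂ : G ⟶ B) (b₃ : B ⟶ G'⟦(1 : ℤ)⟧)
    (hTa : Triangle.mk a₁ a₂ a₃ ∈ distTriang D)
    (hTb : Triangle.mk b₁ b₂ b₃ ∈ distTriang D)
    {φ : ℝ} (hB : S.P φ B)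
    (hF' : IsZero F' ∨ ∃ HF : HNFiltration S F', φ < HF.phase 0) :
    ∃ p : (F' ⟶ G') × (A ⟶ B),
      a₁ ≫ u = p.1 ≫ b₁ ∧ a₂ ≫ p.2 = u ≫ b₂ ∧ a₃ ≫ (p.1)⟦(1 : ℤ)⟧' = p.2 ≫ b₃ := by
  have h1 : (a₁ ≫ u) ≫ b₂ = 0 := S.vanish hB hF' _
  obtain ⟨f', hf'⟩ := Triangle.coyoneda_exact₂ _ hTb (a₁ ≫ u) h1
  obtain ⟨g, hg₁, hg₂⟩ := complete_distinguished_triangle_morphism _ _ hTa hTb f' u hf'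
  exact ⟨(f', g), hf', hg₁, hg₂⟩

lemma Slicing.fill_unique (S : Slicing D) {F G F' G' A B : D} (u : F ⟶ G)
    (a₁ : F' ⟶ F) (a₂ : F ⟶ A) (a₃ : A ⟶ F'⟦(1 : ℤ)⟧)
    (b₁ : G' ⟶ G) (b₂ : G ⟶ B) (b₃ : B ⟶ G'⟦(1 : ℤ)⟧)
    (hTa : Triangle.mk a₁ a₂ a₃ ∈ distTriang D)
    (hTb : Triangle.mk b₁ b₂ b₃ ∈ distTriang D)
    {φ : ℝ} (hB : S.P φ B)
    (hF' : IsZero F' ∨ ∃ HF : HNFiltration S F', φ < HF.phase 0)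
    (p q : (F' ⟶ G') × (A ⟶ B))
    (hp : a₁ ≫ u = p.1 ≫ b₁ ∧ a₂ ≫ p.2 = u ≫ b₂ ∧ a₃ ≫ (p.1)⟦(1 : ℤ)⟧' = p.2 ≫ b₃)
    (hq : a₁ ≫ u = q.1 ≫ b₁ ∧ a₂ ≫ q.2 = u ≫ b₂ ∧ a₃ ≫ (q.1)⟦(1 : ℤ)⟧' = q.2 ≫ b₃) :
    p = q := by
  have h1 : p.1 = q.1 := by
    have hd : (p.1 - q.1) ≫ b₁ = 0 := by rw [Preadditive.sub_comp, ← hp.1, ← hq.1, sub_self]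
    obtain ⟨k, hk⟩ := Triangle.coyoneda_exact₂ _ (inv_rot_of_distTriang _ hTb)
      (p.1 - q.1) hd
    have hk0 : k = 0 := S.vanish_neg hB hF' k
    rw [hk0, zero_comp] at hk
    exact sub_eq_zero.mp hk
  have h2 : p.2 = q.2 := by
    have hd : a₂ ≫ (p.2 - q.2) = 0 := by rw [Preadditive.comp_sub, hp.2.1, hq.2.1, sub_self]
    obtain ⟨k, hk⟩ := Triangle.yoneda_exact₃ _ hTa (p.2 - q.2) hd
    have hk0 : k = 0 := S.vanish_pos hB hF' k
    rw [hk0, comp_zero] at hk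
    exact sub_eq_zero.mp hk
  exact Prod.ext h1 h2

end Aux

/-!
STATEMENT 9:
Let `f : F ≅ G` be an isomorphism and let `F' → F → A →⁺` and `G' → G → B →⁺` be
distinguished triangles with `A ∈ P φ`, `B ∈ P ψ` nonzero, where `F'` (resp. `G'`) is zero or
a nonzero object with a Harder–Narasimhan filtration satisfying `φ₋(F') > φ` (resp.
`φ₋(G') > ψ`). Then `φ = ψ` and there exist unique morphisms `f' : F' ⟶ G'`, `g : A ⟶ B`
such that `(f', f, g)` is a morphism of triangles; moreover `f'` and `g` are isomorphisms.
-/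

theorem statement9
    {D : Type u} [Category.{v} D] [HasZeroObject D] [HasShift D ℤ] [Preadditive D]
    [∀ n : ℤ, (shiftFunctor D n).Additive] [Pretriangulated D]
    (S : Slicing D) {F G F' G' A B : D} (e : F ≅ G)
    (a₁ : F' ⟶ F) (a₂ : F ⟶ A) (a₃ : A ⟶ F'⟦(1 : ℤ)⟧)
    (b₁ : G' ⟶ G) (b₂ : G ⟶ B) (b₃ : B ⟶ G'⟦(1 : ℤ)⟧)
    (hTa : Triangle.mk a₁ a₂ a₃ ∈ distTriang D)
    (hTb : Triangle.mk b₁ b₂ b₃ ∈ distTriang D)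
    {φ ψ : ℝ} (hA : S.P φ A) (hA₀ : ¬ IsZero A) (hB : S.P ψ B) (hB₀ : ¬ IsZero B)
    (hF' : IsZero F' ∨ (¬ IsZero F' ∧ ∃ HF : HNFiltration S F', φ < HF.phase 0))
    (hG' : IsZero G' ∨ (¬ IsZero G' ∧ ∃ HG : HNFiltration S G', ψ < HG.phase 0)) :
    φ = ψ ∧
    (∃! p : (F' ⟶ G') × (A ⟶ B),
      a₁ ≫ e.hom = p.1 ≫ b₁ ∧
      a₂ ≫ p.2 = e.hom ≫ b₂ ∧
      a₃ ≫ (p.1)⟦(1 : ℤ)⟧' = p.2 ≫ b₃) ∧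
    (∀ p : (F' ⟶ G') × (A ⟶ B),
      (a₁ ≫ e.hom = p.1 ≫ b₁ ∧
       a₂ ≫ p.2 = e.hom ≫ b₂ ∧
       a₃ ≫ (p.1)⟦(1 : ℤ)⟧' = p.2 ≫ b₃) → IsIso p.1 ∧ IsIso p.2) := by

  have hF'' : IsZero F' ∨ ∃ HF : HNFiltration S F', φ < HF.phase 0 := hF'.imp id And.right
  have hG'' : IsZero G' ∨ ∃ HG : HNFiltration S G', ψ < HG.phase 0 := hG'.imp id And.right
  have hφψ : φ = ψ :=
    le_antisymm (S.aux_le e a₁ a₂ a₃ b₁ b₂ b₃ hTa hTb hA hB hB₀ hF'' hG'')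
      (S.aux_le e.symm b₁ b₂ b₃ a₁ a₂ a₃ hTb hTa hB hA hA₀ hG'' hF'')
  subst hφψ
  obtain ⟨p₀, hp₀⟩ := S.fill_exists e.hom a₁ a₂ a₃ b₁ b₂ b₃ hTa hTb hB hF''
  refine ⟨rfl, ⟨p₀, hp₀, fun q hq => S.fill_unique e.hom a₁ a₂ a₃ b₁ b₂ b₃ hTa hTb hB hF''
    q p₀ hq hp₀⟩, ?_⟩
  intro p hp
  obtain ⟨q, hq⟩ := S.fill_exists e.inv b₁ b₂ b₃ a₁ a₂ a₃ hTb hTa hA hG''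
  have hPQ : ((p.1 ≫ q.1, p.2 ≫ q.2) : (F' ⟶ F') × (A ⟶ A)) = (𝟙 F', 𝟙 A) := by
    refine S.fill_unique (𝟙 F) a₁ a₂ a₃ a₁ a₂ a₃ hTa hTa hA hF'' _ _ ⟨?_, ?_, ?_⟩
      ⟨by simp, by simp, by simp⟩
    · dsimp only
      rw [Category.assoc, ← hq.1, ← Category.assoc, ← hp.1, Category.assoc,
        e.hom_inv_id, Category.comp_id]
    · dsimp only
      rw [← Category.assoc, hp.2.1, Category.assoc, hq.2.1, ← Category.assoc,
        e.hom_inv_id]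
    · dsimp only
      rw [Functor.map_comp, ← Category.assoc, hp.2.2, Category.assoc, hq.2.2,
        Category.assoc]
  have hQP : ((q.1 ≫ p.1, q.2 ≫ p.2) : (G' ⟶ G') × (B ⟶ B)) = (𝟙 G', 𝟙 B) := by
    refine S.fill_unique (𝟙 G) b₁ b₂ b₃ b₁ b₂ b₃ hTb hTb hB hG'' _ _ ⟨?_, ?_, ?_⟩
      ⟨by simp, by simp, by simp⟩
    · dsimp only
      rw [Category.assoc, ← hp.1, ← Category.assoc, ← hq.1, Category.assoc,
        e.inv_hom_id, Category.comp_id]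
    · dsimp only
      rw [← Category.assoc, hq.2.1, Category.assoc, hp.2.1, ← Category.assoc,
        e.inv_hom_id]
    · dsimp only
      rw [Functor.map_comp, ← Category.assoc, hq.2.2, Category.assoc, hp.2.2,
        Category.assoc]
  exact ⟨⟨q.1, congrArg Prod.fst hPQ, congrArg Prod.fst hQP⟩,
    ⟨q.2, congrArg Prod.snd hPQ, congrArg Prod.snd hQP⟩⟩
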